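/- Let k₁, k₂ be two continuous positive definite kernels on a Hausdorff space 𝒳 with Borel measure μ, each with finite trace ∫ k_j(x,x) dμ(x) < ∞. Suppose that λ_i(k₁;𝒳,dμ) ≍ λ_{2i}(k₁;𝒳,dμ) and λ_i(k₂;𝒳,dμ) = O(λ_i(k₁;𝒳,dμ)) as i → ∞. Then λ_i(k₁+k₂;𝒳,dμ) ≍ λ_i(k₁;𝒳,dμ) as i → ∞. -/

import Mathlib

open MeasureTheory Filter Asymptotics

noncomputable section

/-- A (symmetric) positive definite kernel. -/
def IsPosDefKernel {X : Type*} (k : X → X → ℝ) : Prop :=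
  (∀ x y, k x y = k y x) ∧
  ∀ (n : ℕ) (x : Fin n → X) (c : Fin n → ℝ),
    0 ≤ ∑ i, ∑ j, c i * c j * k (x i) (x j)

/-- The quadratic form of a kernel on `L²(X, μ)`. -/
def quadForm {X : Type*} [MeasurableSpace X] (k : X → X → ℝ) (μ : Measure X) (f : X → ℝ) : ℝ :=
  ∫ x, ∫ y, k x y * f x * f y ∂μ ∂μ

/-- Courant–Fischer characterization of the `i`-th largest eigenvalue (counted with
multiplicity, `i = 1, 2, …`) of the integral operator of the kernel `k` on `L²(X, μ)`:
the supremum over `i`-dimensional subspaces `V` of `L²(X, μ)` of the infimum of the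
quadratic form of `k` over unit vectors of `V`. -/
def kernelEig {X : Type*} [MeasurableSpace X] (k : X → X → ℝ) (μ : Measure X) (i : ℕ) : ℝ :=
  sSup {t : ℝ | ∃ V : Submodule ℝ (Lp ℝ 2 μ), FiniteDimensional ℝ V ∧ Module.finrank ℝ V = i ∧
        t = sInf {s : ℝ | ∃ f : Lp ℝ 2 μ, f ∈ V ∧ ‖f‖ = 1 ∧ s = quadForm k μ f}}

set_option linter.unusedSectionVars false

namespace KEAux

variable {X : Type*}

/-- Bundled symmetric positive definite kernel. -/
structure PDK (X : Type*) where
  k : X → X → ℝ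
  symm : ∀ x y, k x y = k y x
  pd : ∀ (n : ℕ) (x : Fin n → X) (c : Fin n → ℝ),
    0 ≤ ∑ i, ∑ j, c i * c j * k (x i) (x j)

namespace PDK

variable (K : PDK X)

lemma diag_nonneg (x : X) : 0 ≤ K.k x x := by
  have h := K.pd 1 (fun _ => x) (fun _ => 1)
  simpa using h

lemma quad_nonneg (x y : X) (t : ℝ) :
    0 ≤ K.k x x * (t * t) + (2 * K.k x y) * t + K.k y y := by
  have h := K.pd 2 ![x, y] ![t, 1]
  rw [Fin.sum_univ_two] at h
  rw [Fin.sum_univ_two, Fin.sum_univ_two] at h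
  simp only [Matrix.cons_val_zero, Matrix.cons_val_one, Matrix.head_cons] at h
  have hs : K.k x y = K.k y x := K.symm x y
  rw [show K.k x x * (t * t) + (2 * K.k x y) * t + K.k y y
      = t * t * K.k x x + t * 1 * K.k x y + (1 * t * K.k x y + 1 * 1 * K.k y y) by ring]
  rw [hs] at h ⊢
  linarith [h]

lemma sq_le_diag_mul_diag (x y : X) : K.k x y ^ 2 ≤ K.k x x * K.k y y := by
  have h := discrim_le_zero (fun t => by
    have := K.quad_nonneg x y t
    linarith [this] : ∀ t : ℝ, 0 ≤ K.k x x * (t * t) + (2 * K.k x y) * t + K.k y y)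
  rw [discrim] at h
  nlinarith [h]

lemma abs_le_sqrt_mul_sqrt (x y : X) :
    |K.k x y| ≤ Real.sqrt (K.k x x) * Real.sqrt (K.k y y) := by
  rw [← Real.sqrt_sq_eq_abs, ← Real.sqrt_mul (K.diag_nonneg x)]
  exact Real.sqrt_le_sqrt (K.sq_le_diag_mul_diag x y)

/-! Finsupp-level inner product. -/

/-- Evaluation against the kernel at a point, as a linear functional. -/
def evalF (x : X) : (X →₀ ℝ) →ₗ[ℝ] ℝ :=
  Finsupp.linearCombination ℝ (fun y => K.k x y)

/-- The candidate inner product, as a bilinear map. -/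
def innerL : (X →₀ ℝ) →ₗ[ℝ] (X →₀ ℝ) →ₗ[ℝ] ℝ :=
  Finsupp.linearCombination ℝ (fun x => K.evalF x)

lemma evalF_apply (x : X) (d : X →₀ ℝ) :
    K.evalF x d = ∑ y ∈ d.support, d y * K.k x y := by
  simp [evalF, Finsupp.linearCombination_apply, Finsupp.sum, smul_eq_mul]

lemma innerL_apply (c d : X →₀ ℝ) :
    K.innerL c d = ∑ x ∈ c.support, ∑ y ∈ d.support, c x * d y * K.k x y := by
  have h : K.innerL c = ∑ x ∈ c.support, c x • K.evalF x := by
    simp [innerL, Finsupp.linearCombination_apply, Finsupp.sum]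
  rw [h, LinearMap.sum_apply]
  refine Finset.sum_congr rfl fun x _ => ?_
  rw [LinearMap.smul_apply, evalF_apply, smul_eq_mul, Finset.mul_sum]
  exact Finset.sum_congr rfl fun y _ => by ring

lemma innerL_comm (c d : X →₀ ℝ) : K.innerL c d = K.innerL d c := by
  rw [innerL_apply, innerL_apply, Finset.sum_comm]
  refine Finset.sum_congr rfl fun y _ => Finset.sum_congr rfl fun x _ => ?_
  rw [K.symm y x]; ring

lemma innerL_self_nonneg (c : X →₀ ℝ) : 0 ≤ K.innerL c c := by
  rw [innerL_apply]
  classical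
  set s := c.support
  have e : Fin s.card ≃ {x // x ∈ s} := (Finset.equivFin s).symm
  have h := K.pd s.card (fun i => (e i : X)) (fun i => c (e i : X))
  calc (0:ℝ) ≤ ∑ i, ∑ j, c (e i : X) * c (e j : X) * K.k (e i : X) (e j : X) := h
    _ = ∑ x ∈ s, ∑ y ∈ s, c x * c y * K.k x y := by
        rw [← Finset.sum_coe_sort s (fun x => ∑ y ∈ s, c x * c y * K.k x y)]
        refine Fintype.sum_equiv e _ _ (fun i => ?_)
        rw [← Finset.sum_coe_sort s (fun y => c (e i : X) * c y * K.k (e i : X) y)]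
        exact Fintype.sum_equiv e _ _ (fun j => rfl)

/-- Single-point evaluations. -/
lemma innerL_single_single (x y : X) :
    K.innerL (Finsupp.single x 1) (Finsupp.single y 1) = K.k x y := by
  classical
  rw [innerL_apply]
  rw [Finsupp.support_single_ne_zero x (one_ne_zero), Finsupp.support_single_ne_zero y one_ne_zero]
  simp

lemma innerL_single_left (x : X) (d : X →₀ ℝ) :
    K.innerL (Finsupp.single x 1) d = ∑ y ∈ d.support, d y * K.k x y := by
  classical
  rw [innerL_apply, Finsupp.support_single_ne_zero x (one_ne_zero)]
  simp

end PDK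

/-! ### The pre-RKHS as a type synonym with seminormed inner-product structure -/

/-- Type synonym for the pre-RKHS of a kernel. -/
@[nolint unusedArguments]
def Pre (_K : PDK X) : Type _ := X →₀ ℝ

namespace Pre

variable (K : PDK X)

instance : AddCommGroup (Pre K) := inferInstanceAs (AddCommGroup (X →₀ ℝ))
instance : Module ℝ (Pre K) := inferInstanceAs (Module ℝ (X →₀ ℝ))

/-- Interpret an element of the pre-RKHS as a finitely supported function. -/
def toF (c : Pre K) : X →₀ ℝ := c

/-- Build an element of the pre-RKHS from a finitely supported function. -/
def ofF (c : X →₀ ℝ) : Pre K := c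

@[simp] lemma toF_ofF (c : X →₀ ℝ) : toF K (ofF K c) = c := rfl

lemma toF_add (c d : Pre K) : toF K (c + d) = toF K c + toF K d := rfl
lemma toF_smul (r : ℝ) (c : Pre K) : toF K (r • c) = r • toF K c := rfl

/-- The pre-inner-product space core structure. -/
def preCore : PreInnerProductSpace.Core ℝ (Pre K) where
  inner c d := K.innerL (toF K c) (toF K d)
  conj_inner_symm c d := by simpa using K.innerL_comm (toF K d) (toF K c)
  re_inner_nonneg c := by simpa using K.innerL_self_nonneg (toF K c)
  add_left c c' d := by
    show K.innerL (toF K c + toF K c') _ = _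
    rw [map_add]; rfl
  smul_left c d r := by
    show K.innerL (r • toF K c) _ = _
    rw [_root_.map_smul]
    simp

instance : SeminormedAddCommGroup (Pre K) :=
  @InnerProductSpace.Core.toSeminormedAddCommGroup ℝ (Pre K) _ _ _ (preCore K)

instance : InnerProductSpace ℝ (Pre K) :=
  letI : NormedSpace ℝ (Pre K) :=
    @InnerProductSpace.Core.toNormedSpace ℝ (Pre K) _ _ _ (preCore K)
  { (preCore K) with
    norm_sq_eq_re_inner := fun x => by
      have h₁ : ‖x‖ ^ 2 = Real.sqrt ((preCore K).inner x x) ^ 2 := rfl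
      have h₂ : 0 ≤ (preCore K).inner x x := by
        exact K.innerL_self_nonneg (toF K x)
      simpa [h₁] using Real.sq_sqrt h₂ }

lemma inner_def (c d : Pre K) : (inner ℝ c d : ℝ) = K.innerL (toF K c) (toF K d) := rfl

lemma norm_def (c : Pre K) : ‖c‖ = Real.sqrt (K.innerL (toF K c) (toF K c)) := rfl

end Pre


/-! ### The RKHS: completion of the pre-RKHS -/

open UniformSpace in
/-- The RKHS of a kernel, as the completion of the pre-RKHS. -/
abbrev RKHS (K : PDK X) : Type _ := UniformSpace.Completion (Pre K)

variable (K : PDK X)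

/-- The canonical feature map. -/
def emb (x : X) : RKHS K := (↑(Pre.ofF K (Finsupp.single x 1)) : UniformSpace.Completion (Pre K))

lemma inner_emb (x y : X) : (inner ℝ (emb K x) (emb K y) : ℝ) = K.k x y := by
  rw [emb, emb, UniformSpace.Completion.inner_coe, Pre.inner_def]
  simpa using K.innerL_single_single x y

lemma norm_emb_sq (x : X) : ‖emb K x‖ ^ 2 = K.k x x := by
  rw [← real_inner_self_eq_norm_sq, inner_emb]

lemma norm_emb (x : X) : ‖emb K x‖ = Real.sqrt (K.k x x) := by
  rw [← norm_emb_sq, Real.sqrt_sq (norm_nonneg _)]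

lemma abs_inner_emb_le (w : RKHS K) (x : X) :
    |(inner ℝ w (emb K x) : ℝ)| ≤ ‖w‖ * Real.sqrt (K.k x x) := by
  rw [← norm_emb]
  exact abs_real_inner_le_norm w (emb K x)

lemma inner_coe_emb (u : Pre K) (x : X) :
    (inner ℝ (↑u : RKHS K) (emb K x) : ℝ)
      = ∑ z ∈ (Pre.toF K u).support, (Pre.toF K u) z * K.k z x := by
  rw [emb, UniformSpace.Completion.inner_coe, Pre.inner_def]
  rw [K.innerL_comm]
  rw [show Pre.toF K (Pre.ofF K (Finsupp.single x 1)) = Finsupp.single x 1 from rfl]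
  rw [K.innerL_single_left]
  refine Finset.sum_congr rfl fun z _ => ?_
  rw [K.symm x z]

variable [MeasurableSpace X]

lemma measurable_inner_emb (hker : ∀ z : X, Measurable (fun x => K.k z x)) (w : RKHS K) :
    Measurable (fun x => (inner ℝ w (emb K x) : ℝ)) := by
  -- w is a sequential limit of elements of the pre-RKHS
  have hdense : w ∈ closure (Set.range ((↑·) : Pre K → RKHS K)) :=
    UniformSpace.Completion.denseRange_coe w
  rcases mem_closure_iff_seq_limit.mp hdense with ⟨ws, hws_mem, hws_lim⟩
  choose us hus using hws_mem
  have hbase : ∀ n, Measurable (fun x => (inner ℝ (ws n) (emb K x) : ℝ)) := by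
    intro n
    rw [← hus n]
    have : (fun x => (inner ℝ (↑(us n) : RKHS K) (emb K x) : ℝ))
        = fun x => ∑ z ∈ (Pre.toF K (us n)).support, (Pre.toF K (us n)) z * K.k z x := by
      funext x; exact inner_coe_emb K (us n) x
    rw [this]
    exact Finset.measurable_sum _ (fun z _ => (hker z).const_mul _)
  apply measurable_of_tendsto_metrizable hbase
  rw [tendsto_pi_nhds]
  intro x
  exact Tendsto.inner hws_lim tendsto_const_nhds


/-! ### Integration layer -/

section Integration

variable {μ : Measure X}

/-- Product of two `L²` functions is integrable. -/
lemma integrable_mul_of_L2 {f g : X → ℝ} (hf : MemLp f 2 μ) (hg : MemLp g 2 μ) :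
    Integrable (fun x => f x * g x) μ := by
  have h := L2.integrable_inner (𝕜 := ℝ) (hf.toLp f) (hg.toLp g)
  refine h.congr ?_
  filter_upwards [hf.coeFn_toLp, hg.coeFn_toLp] with x h1 h2
  rw [RCLike.inner_apply, h1, h2]
  simp [mul_comm]

/-- The square-root of the kernel diagonal. -/
def rK (K : PDK X) : X → ℝ := fun x => Real.sqrt (K.k x x)

variable (K : PDK X)

lemma rK_nonneg (x : X) : 0 ≤ rK K x := Real.sqrt_nonneg _

lemma sq_rK (x : X) : rK K x ^ 2 = K.k x x := Real.sq_sqrt (K.diag_nonneg x)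

lemma memℒp_rK (hdiag : Integrable (fun x => K.k x x) μ) : MemLp (rK K) 2 μ := by
  have hm : AEStronglyMeasurable (rK K) μ :=
    (Real.continuous_sqrt.comp_aestronglyMeasurable hdiag.aestronglyMeasurable)
  rw [memLp_two_iff_integrable_sq hm]
  refine hdiag.congr (Eventually.of_forall fun x => (sq_rK K x).symm)

lemma rKf_integrable (hdiag : Integrable (fun x => K.k x x) μ)
    {f : X → ℝ} (hf : MemLp f 2 μ) :
    Integrable (fun y => rK K y * |f y|) μ :=
  integrable_mul_of_L2 (memℒp_rK K hdiag) hf.abs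

/-- The functional `w ↦ ∫ ⟪w, emb y⟫ f y` is defined and bounded. -/
lemma integrable_inner_emb_mul (hker : ∀ z : X, Measurable (fun x => K.k z x))
    (hdiag : Integrable (fun x => K.k x x) μ)
    {f : X → ℝ} (hf : MemLp f 2 μ) (w : RKHS K) :
    Integrable (fun y => (inner ℝ w (emb K y) : ℝ) * f y) μ := by
  have hm : AEStronglyMeasurable (fun y => (inner ℝ w (emb K y) : ℝ) * f y) μ :=
    ((measurable_inner_emb K hker w).aestronglyMeasurable.mul hf.aestronglyMeasurable)
  have hbd : Integrable (fun y => ‖w‖ * (rK K y * |f y|)) μ :=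
    (rKf_integrable K hdiag hf).const_mul _
  refine hbd.mono' hm ?_
  refine Eventually.of_forall fun y => ?_
  rw [norm_mul]
  calc |(inner ℝ w (emb K y) : ℝ)| * ‖f y‖ ≤ (‖w‖ * rK K y) * |f y| := by
        refine mul_le_mul_of_nonneg_right ?_ (abs_nonneg _)
        exact abs_inner_emb_le K w y
    _ = ‖w‖ * (rK K y * |f y|) := by ring

/-- The Riesz representative of `w ↦ ∫ ⟪w, emb y⟫ f y`. -/
def vK (hker : ∀ z : X, Measurable (fun x => K.k z x))
    (hdiag : Integrable (fun x => K.k x x) μ)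
    {f : X → ℝ} (hf : MemLp f 2 μ) : RKHS K :=
  (InnerProductSpace.toDual ℝ (RKHS K)).symm
    (LinearMap.mkContinuous
      { toFun := fun w => ∫ y, (inner ℝ w (emb K y) : ℝ) * f y ∂μ
        map_add' := fun w w' => by
          rw [← integral_add (integrable_inner_emb_mul K hker hdiag hf w)
            (integrable_inner_emb_mul K hker hdiag hf w')]
          refine integral_congr_ae (Eventually.of_forall fun y => ?_)
          simp only [inner_add_left]; ring
        map_smul' := fun r w => by
          rw [RingHom.id_apply, ← integral_smul]
          refine integral_congr_ae (Eventually.of_forall fun y => ?_)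
          simp only [real_inner_smul_left, smul_eq_mul]; ring }
      (∫ y, rK K y * |f y| ∂μ)
      (fun w => by
        rw [LinearMap.coe_mk, AddHom.coe_mk]
        calc ‖∫ y, (inner ℝ w (emb K y) : ℝ) * f y ∂μ‖
            ≤ ∫ y, ‖w‖ * (rK K y * |f y|) ∂μ := by
              refine norm_integral_le_of_norm_le ((rKf_integrable K hdiag hf).const_mul _) ?_
              refine Eventually.of_forall fun y => ?_
              rw [norm_mul]
              calc |(inner ℝ w (emb K y) : ℝ)| * ‖f y‖ ≤ (‖w‖ * rK K y) * |f y| :=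
                    mul_le_mul_of_nonneg_right (abs_inner_emb_le K w y) (abs_nonneg _)
                _ = ‖w‖ * (rK K y * |f y|) := by ring
          _ = (∫ y, rK K y * |f y| ∂μ) * ‖w‖ := by
              rw [integral_const_mul]; ring))

variable (hker : ∀ z : X, Measurable (fun x => K.k z x))
  (hdiag : Integrable (fun x => K.k x x) μ)

lemma inner_vK {f : X → ℝ} (hf : MemLp f 2 μ) (w : RKHS K) :
    (inner ℝ (vK K hker hdiag hf) w : ℝ) = ∫ y, (inner ℝ w (emb K y) : ℝ) * f y ∂μ := by
  rw [vK, InnerProductSpace.toDual_symm_apply]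
  rfl

lemma norm_vK_le {f : X → ℝ} (hf : MemLp f 2 μ) :
    ‖vK K hker hdiag hf‖ ≤ ∫ y, rK K y * |f y| ∂μ := by
  rw [vK, LinearIsometryEquiv.norm_map]
  exact LinearMap.mkContinuous_norm_le _
    (integral_nonneg fun y => mul_nonneg (rK_nonneg K y) (abs_nonneg _)) _

lemma integral_ker_eq {f : X → ℝ} (hf : MemLp f 2 μ) (x : X) :
    ∫ y, K.k x y * f y ∂μ = (inner ℝ (vK K hker hdiag hf) (emb K x) : ℝ) := by
  rw [inner_vK]
  refine integral_congr_ae (Eventually.of_forall fun y => ?_)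
  simp only [inner_emb K]

end Integration


/-! ### quadForm via the RKHS -/

section QuadForm

variable {μ : Measure X} (K : PDK X)

lemma inner_integrand_integrable (hker : ∀ z : X, Measurable (fun x => K.k z x))
    (hdiag : Integrable (fun x => K.k x x) μ) {f : X → ℝ} (hf : MemLp f 2 μ) (x : X) :
    Integrable (fun y => K.k x y * f y) μ := by
  have hm : AEStronglyMeasurable (fun y => K.k x y * f y) μ :=
    (hker x).aestronglyMeasurable.mul hf.aestronglyMeasurable
  have hbd : Integrable (fun y => rK K x * (rK K y * |f y|)) μ :=
    (rKf_integrable K hdiag hf).const_mul _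
  refine hbd.mono' hm (Eventually.of_forall fun y => ?_)
  rw [norm_mul]
  calc |K.k x y| * ‖f y‖ ≤ (rK K x * rK K y) * |f y| :=
        mul_le_mul_of_nonneg_right (K.abs_le_sqrt_mul_sqrt x y) (abs_nonneg _)
    _ = rK K x * (rK K y * |f y|) := by ring

lemma inner_integral_eq (hker : ∀ z : X, Measurable (fun x => K.k z x))
    (hdiag : Integrable (fun x => K.k x x) μ) {f : X → ℝ} (hf : MemLp f 2 μ) (x : X) :
    ∫ y, K.k x y * f x * f y ∂μ = (inner ℝ (vK K hker hdiag hf) (emb K x) : ℝ) * f x := by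
  rw [← integral_ker_eq K hker hdiag hf x, ← integral_mul_const]
  refine integral_congr_ae (Eventually.of_forall fun y => ?_)
  simp only; ring

lemma quadForm_eq_inner (hker : ∀ z : X, Measurable (fun x => K.k z x))
    (hdiag : Integrable (fun x => K.k x x) μ) {f : X → ℝ} (hf : MemLp f 2 μ) :
    quadForm K.k μ f = (inner ℝ (vK K hker hdiag hf) (vK K hker hdiag hf) : ℝ) := by
  rw [quadForm]
  rw [integral_congr_ae (Eventually.of_forall fun x => inner_integral_eq K hker hdiag hf x)]
  exact (inner_vK K hker hdiag hf _).symm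

lemma quadForm_nonneg (hker : ∀ z : X, Measurable (fun x => K.k z x))
    (hdiag : Integrable (fun x => K.k x x) μ) {f : X → ℝ} (hf : MemLp f 2 μ) : 0 ≤ quadForm K.k μ f := by
  rw [quadForm_eq_inner K hker hdiag hf]
  exact real_inner_self_nonneg

/-- Sum of two kernels. -/
def PDK.add (K₁ K₂ : PDK X) : PDK X where
  k := fun x y => K₁.k x y + K₂.k x y
  symm := fun x y => by show K₁.k x y + K₂.k x y = K₁.k y x + K₂.k y x
                        rw [K₁.symm x y, K₂.symm x y]
  pd := fun n x c => by
    have h₁ := K₁.pd n x c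
    have h₂ := K₂.pd n x c
    have : ∑ i, ∑ j, c i * c j * (K₁.k (x i) (x j) + K₂.k (x i) (x j))
        = (∑ i, ∑ j, c i * c j * K₁.k (x i) (x j))
          + ∑ i, ∑ j, c i * c j * K₂.k (x i) (x j) := by
      rw [← Finset.sum_add_distrib]
      refine Finset.sum_congr rfl fun i _ => ?_
      rw [← Finset.sum_add_distrib]
      exact Finset.sum_congr rfl fun j _ => by ring
    rw [this]
    exact add_nonneg h₁ h₂

lemma quadForm_add_kernel (K₁ K₂ : PDK X)
    (hker₁ : ∀ z : X, Measurable (fun x => K₁.k z x))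
    (hker₂ : ∀ z : X, Measurable (fun x => K₂.k z x))
    (hdiag₁ : Integrable (fun x => K₁.k x x) μ)
    (hdiag₂ : Integrable (fun x => K₂.k x x) μ)
    {f : X → ℝ} (hf : MemLp f 2 μ) :
    quadForm (K₁.add K₂).k μ f = quadForm K₁.k μ f + quadForm K₂.k μ f := by
  have hin : ∀ x, ∫ y, (K₁.add K₂).k x y * f x * f y ∂μ
      = (∫ y, K₁.k x y * f x * f y ∂μ) + ∫ y, K₂.k x y * f x * f y ∂μ := by
    intro x
    have h₁ : Integrable (fun y => K₁.k x y * f x * f y) μ := by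
      have := (inner_integrand_integrable K₁ hker₁ hdiag₁ hf x).mul_const (f x)
      refine this.congr (Eventually.of_forall fun y => ?_); simp only; ring
    have h₂ : Integrable (fun y => K₂.k x y * f x * f y) μ := by
      have := (inner_integrand_integrable K₂ hker₂ hdiag₂ hf x).mul_const (f x)
      refine this.congr (Eventually.of_forall fun y => ?_); simp only; ring
    rw [← integral_add h₁ h₂]
    refine integral_congr_ae (Eventually.of_forall fun y => ?_)
    show (K₁.k x y + K₂.k x y) * f x * f y = _
    ring
  have hout₁ : Integrable (fun x => ∫ y, K₁.k x y * f x * f y ∂μ) μ := by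
    have := integrable_inner_emb_mul K₁ hker₁ hdiag₁ hf (vK K₁ hker₁ hdiag₁ hf)
    refine this.congr (Eventually.of_forall fun x => ?_)
    exact (inner_integral_eq K₁ hker₁ hdiag₁ hf x).symm
  have hout₂ : Integrable (fun x => ∫ y, K₂.k x y * f x * f y ∂μ) μ := by
    have := integrable_inner_emb_mul K₂ hker₂ hdiag₂ hf (vK K₂ hker₂ hdiag₂ hf)
    refine this.congr (Eventually.of_forall fun x => ?_)
    exact (inner_integral_eq K₂ hker₂ hdiag₂ hf x).symm
  rw [quadForm, quadForm, quadForm]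
  rw [integral_congr_ae (Eventually.of_forall hin)]
  exact integral_add hout₁ hout₂

end QuadForm


/-! ### The `L²` layer -/

section LpLayer

variable {μ : Measure X} (K : PDK X)

/-- The map `f ↦ v_f` as a linear map on `L²`. -/
def vLp (hker : ∀ z : X, Measurable (fun x => K.k z x))
    (hdiag : Integrable (fun x => K.k x x) μ) : Lp ℝ 2 μ →ₗ[ℝ] RKHS K where
  toFun f := vK K hker hdiag (Lp.memLp f)
  map_add' f g := by
    refine ext_inner_right ℝ fun w => ?_
    rw [inner_add_left, inner_vK, inner_vK, inner_vK]
    rw [← integral_add (integrable_inner_emb_mul K hker hdiag (Lp.memLp f) w)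
      (integrable_inner_emb_mul K hker hdiag (Lp.memLp g) w)]
    refine integral_congr_ae ?_
    filter_upwards [Lp.coeFn_add f g] with y hy
    rw [hy]
    simp only [Pi.add_apply]
    ring
  map_smul' r f := by
    refine ext_inner_right ℝ fun w => ?_
    rw [RingHom.id_apply, real_inner_smul_left, inner_vK, inner_vK, ← integral_const_mul]
    refine integral_congr_ae ?_
    filter_upwards [Lp.coeFn_smul r f] with y hy
    rw [hy]
    simp only [Pi.smul_apply, smul_eq_mul]
    ring

lemma quadForm_eq_vLp (hker : ∀ z : X, Measurable (fun x => K.k z x))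
    (hdiag : Integrable (fun x => K.k x x) μ) (f : Lp ℝ 2 μ) :
    quadForm K.k μ f = (inner ℝ (vLp K hker hdiag f) (vLp K hker hdiag f) : ℝ) :=
  quadForm_eq_inner K hker hdiag (Lp.memLp f)

/-- The total mass of the kernel diagonal. -/
def MK (K : PDK X) (μ : Measure X) : ℝ := ∫ x, K.k x x ∂μ

lemma MK_nonneg : 0 ≤ MK K μ := integral_nonneg fun x => K.diag_nonneg x

lemma integral_rK_abs_le (hdiag : Integrable (fun x => K.k x x) μ) (f : Lp ℝ 2 μ) :
    ∫ y, rK K y * |f y| ∂μ ≤ Real.sqrt (MK K μ) * ‖f‖ := by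
  set a := (memℒp_rK K hdiag).toLp (rK K) with ha
  set b := ((Lp.memLp f).abs).toLp (|(f : X → ℝ)|) with hb
  have h1 : ∫ y, rK K y * |f y| ∂μ = (inner ℝ a b : ℝ) := by
    rw [L2.inner_def]
    refine integral_congr_ae ?_
    filter_upwards [(memℒp_rK K hdiag).coeFn_toLp, ((Lp.memLp f).abs).coeFn_toLp]
      with y h1 h2
    rw [RCLike.inner_apply, h1, h2]
    simp [mul_comm]
  have h2 : (inner ℝ a b : ℝ) ≤ ‖a‖ * ‖b‖ := real_inner_le_norm a b
  have h3 : ‖a‖ = Real.sqrt (MK K μ) := by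
    have hsq : ‖a‖ ^ 2 = MK K μ := by
      rw [← real_inner_self_eq_norm_sq, L2.inner_def, MK]
      refine integral_congr_ae ?_
      filter_upwards [(memℒp_rK K hdiag).coeFn_toLp] with y hy
      rw [RCLike.inner_apply, hy]
      simp only [starRingEnd_apply, star_trivial]
      simp only [rK]
      exact Real.mul_self_sqrt (K.diag_nonneg y)
    rw [← hsq, Real.sqrt_sq (norm_nonneg _)]
  have h4 : ‖b‖ = ‖f‖ := by
    have hsq : ‖b‖ ^ 2 = ‖f‖ ^ 2 := by
      rw [← real_inner_self_eq_norm_sq, ← real_inner_self_eq_norm_sq, L2.inner_def, L2.inner_def]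
      refine integral_congr_ae ?_
      filter_upwards [((Lp.memLp f).abs).coeFn_toLp] with y hy
      rw [RCLike.inner_apply, RCLike.inner_apply, hy]
      simp only [starRingEnd_apply, star_trivial, Pi.abs_apply]
      rw [abs_mul_abs_self]
    rw [← Real.sqrt_sq (norm_nonneg b), hsq, Real.sqrt_sq (norm_nonneg f)]
  calc ∫ y, rK K y * |f y| ∂μ = (inner ℝ a b : ℝ) := h1
    _ ≤ ‖a‖ * ‖b‖ := h2
    _ = Real.sqrt (MK K μ) * ‖f‖ := by rw [h3, h4]

lemma norm_vLp_le (hker : ∀ z : X, Measurable (fun x => K.k z x))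
    (hdiag : Integrable (fun x => K.k x x) μ) (f : Lp ℝ 2 μ) :
    ‖vLp K hker hdiag f‖ ≤ Real.sqrt (MK K μ) * ‖f‖ :=
  le_trans (norm_vK_le K hker hdiag (Lp.memLp f)) (integral_rK_abs_le K hdiag f)

lemma quadForm_le_MK (hker : ∀ z : X, Measurable (fun x => K.k z x))
    (hdiag : Integrable (fun x => K.k x x) μ) (f : Lp ℝ 2 μ) (hf1 : ‖f‖ = 1) :
    quadForm K.k μ f ≤ MK K μ := by
  rw [quadForm_eq_vLp K hker hdiag f, real_inner_self_eq_norm_sq]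
  have h := norm_vLp_le K hker hdiag f
  rw [hf1, mul_one] at h
  calc ‖vLp K hker hdiag f‖ ^ 2 ≤ Real.sqrt (MK K μ) ^ 2 := by
        exact pow_le_pow_left₀ (norm_nonneg _) h 2
    _ = MK K μ := Real.sq_sqrt (MK_nonneg K)

lemma quadForm_nonneg_Lp (hker : ∀ z : X, Measurable (fun x => K.k z x))
    (hdiag : Integrable (fun x => K.k x x) μ) (f : Lp ℝ 2 μ) : 0 ≤ quadForm K.k μ f :=
  quadForm_nonneg K hker hdiag (Lp.memLp f)

end LpLayer


/-! ### Bookkeeping for `kernelEig` -/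

section Bookkeeping

variable {μ : Measure X}

/-- The set of values of the quadratic form on the unit sphere of `V`. -/
def SV (k : X → X → ℝ) (μ : Measure X) (V : Submodule ℝ (Lp ℝ 2 μ)) : Set ℝ :=
  {s : ℝ | ∃ f : Lp ℝ 2 μ, f ∈ V ∧ ‖f‖ = 1 ∧ s = quadForm k μ f}

/-- The set of candidate eigenvalue lower bounds at index `i`. -/
def AS (k : X → X → ℝ) (μ : Measure X) (i : ℕ) : Set ℝ :=
  {t : ℝ | ∃ V : Submodule ℝ (Lp ℝ 2 μ), FiniteDimensional ℝ V ∧ Module.finrank ℝ V = i ∧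
    t = sInf (SV k μ V)}

lemma kernelEig_eq (k : X → X → ℝ) (i : ℕ) : kernelEig k μ i = sSup (AS k μ i) := rfl

lemma exists_unit_of_ne_bot (V : Submodule ℝ (Lp ℝ 2 μ)) (h : V ≠ ⊥) :
    ∃ f : Lp ℝ 2 μ, f ∈ V ∧ ‖f‖ = 1 := by
  obtain ⟨f, hfV, hf0⟩ := Submodule.exists_mem_ne_zero_of_ne_bot h
  refine ⟨‖f‖⁻¹ • f, V.smul_mem _ hfV, ?_⟩
  rw [norm_smul, norm_inv, norm_norm]
  rw [inv_mul_cancel₀ (norm_ne_zero_iff.mpr hf0)]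

lemma ne_bot_of_finrank {V : Submodule ℝ (Lp ℝ 2 μ)} {i : ℕ} (hV : Module.finrank ℝ V = i)
    (hi : 1 ≤ i) : V ≠ ⊥ := by
  intro hbot
  rw [hbot, finrank_bot] at hV
  omega

lemma SV_nonempty {V : Submodule ℝ (Lp ℝ 2 μ)} {i : ℕ} (hV : Module.finrank ℝ V = i)
    (hi : 1 ≤ i) (k : X → X → ℝ) : (SV k μ V).Nonempty := by
  obtain ⟨f, hfV, hf1⟩ := exists_unit_of_ne_bot V (ne_bot_of_finrank hV hi)
  exact ⟨quadForm k μ f, f, hfV, hf1, rfl⟩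

section withBounds

variable (k : X → X → ℝ) (M : ℝ) (hM : 0 ≤ M)
  (hQ0 : ∀ f : Lp ℝ 2 μ, 0 ≤ quadForm k μ f)
  (hQM : ∀ f : Lp ℝ 2 μ, ‖f‖ = 1 → quadForm k μ f ≤ M)

include hQ0 in
lemma SV_nonneg {V : Submodule ℝ (Lp ℝ 2 μ)} {s : ℝ} (hs : s ∈ SV k μ V) : 0 ≤ s := by
  obtain ⟨f, _, _, rfl⟩ := hs; exact hQ0 f

include hQ0 in
lemma sInf_SV_nonneg (V : Submodule ℝ (Lp ℝ 2 μ)) : 0 ≤ sInf (SV k μ V) :=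
  Real.sInf_nonneg fun _ hs => SV_nonneg k hQ0 hs

include hQ0 in
lemma bddBelow_SV (V : Submodule ℝ (Lp ℝ 2 μ)) : BddBelow (SV k μ V) :=
  ⟨0, fun _ hs => SV_nonneg k hQ0 hs⟩

include hM hQ0 hQM in
lemma sInf_SV_le_M (V : Submodule ℝ (Lp ℝ 2 μ)) : sInf (SV k μ V) ≤ M := by
  rcases Set.eq_empty_or_nonempty (SV k μ V) with h | h
  · rw [h, Real.sInf_empty]; exact hM
  · obtain ⟨s, hs⟩ := h
    refine csInf_le_of_le (bddBelow_SV k hQ0 V) hs ?_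
    obtain ⟨f, _, hf1, rfl⟩ := hs
    exact hQM f hf1

include hM hQ0 hQM in
lemma AS_le_M {i : ℕ} {t : ℝ} (ht : t ∈ AS k μ i) : t ≤ M := by
  obtain ⟨V, _, _, rfl⟩ := ht
  exact sInf_SV_le_M k M hM hQ0 hQM V

include hM hQ0 hQM in
lemma bddAbove_AS (i : ℕ) : BddAbove (AS k μ i) :=
  ⟨M, fun _ ht => AS_le_M k M hM hQ0 hQM ht⟩

include hQ0 in
lemma kernelEig_nonneg (i : ℕ) : 0 ≤ kernelEig k μ i := by
  rw [kernelEig_eq]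
  refine Real.sSup_nonneg fun t ht => ?_
  obtain ⟨V, _, _, rfl⟩ := ht
  exact sInf_SV_nonneg k hQ0 V

include hM hQ0 hQM in
lemma le_kernelEig (i : ℕ) (V : Submodule ℝ (Lp ℝ 2 μ)) (hfd : FiniteDimensional ℝ V)
    (hV : Module.finrank ℝ V = i) : sInf (SV k μ V) ≤ kernelEig k μ i := by
  rw [kernelEig_eq]
  exact le_csSup (bddAbove_AS k M hM hQ0 hQM i) ⟨V, hfd, hV, rfl⟩

lemma kernelEig_le {i : ℕ} {b : ℝ} (hb : 0 ≤ b)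
    (h : ∀ V : Submodule ℝ (Lp ℝ 2 μ), FiniteDimensional ℝ V → Module.finrank ℝ V = i →
      sInf (SV k μ V) ≤ b) : kernelEig k μ i ≤ b := by
  rw [kernelEig_eq]
  refine Real.sSup_le (fun t ht => ?_) hb
  obtain ⟨V, hfd, hV, rfl⟩ := ht
  exact h V hfd hV

include hQ0 in
lemma sInf_SV_le_quadForm (V : Submodule ℝ (Lp ℝ 2 μ)) (f : Lp ℝ 2 μ) (hfV : f ∈ V)
    (hf1 : ‖f‖ = 1) : sInf (SV k μ V) ≤ quadForm k μ f :=
  csInf_le (bddBelow_SV k hQ0 V) ⟨f, hfV, hf1, rfl⟩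

lemma le_sInf_SV (V : Submodule ℝ (Lp ℝ 2 μ)) (hne : (SV k μ V).Nonempty) {b : ℝ}
    (h : ∀ f : Lp ℝ 2 μ, f ∈ V → ‖f‖ = 1 → b ≤ quadForm k μ f) : b ≤ sInf (SV k μ V) := by
  refine le_csInf hne fun s hs => ?_
  obtain ⟨f, hfV, hf1, rfl⟩ := hs
  exact h f hfV hf1

end withBounds

lemma exists_le_submodule {V : Submodule ℝ (Lp ℝ 2 μ)} [hfd : FiniteDimensional ℝ V] {i j : ℕ}
    (hV : Module.finrank ℝ V = i) (hji : j ≤ i) :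
    ∃ W : Submodule ℝ (Lp ℝ 2 μ), W ≤ V ∧ FiniteDimensional ℝ W ∧ Module.finrank ℝ W = j := by
  classical
  have hji' : j ≤ Module.finrank ℝ V := hV ▸ hji
  let b := Module.finBasis ℝ V
  let g : Fin j → Lp ℝ 2 μ := fun t => (b (Fin.castLE hji' t) : Lp ℝ 2 μ)
  have hli : LinearIndependent ℝ g := by
    have h1 : LinearIndependent ℝ (fun t : Fin (Module.finrank ℝ V) => (b t : Lp ℝ 2 μ)) :=
      b.linearIndependent.map' V.subtype V.ker_subtype
    exact h1.comp (Fin.castLE hji') (Fin.castLE_injective hji')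
  refine ⟨Submodule.span ℝ (Set.range g), ?_, ?_, ?_⟩
  · rw [Submodule.span_le]
    rintro x ⟨t, rfl⟩
    exact SetLike.coe_mem _
  · exact FiniteDimensional.span_of_finite ℝ (Set.finite_range g)
  · rw [finrank_span_eq_card hli, Fintype.card_fin]

lemma kernelEig_antitone (k : X → X → ℝ) (M : ℝ) (hM : 0 ≤ M)
    (hQ0 : ∀ f : Lp ℝ 2 μ, 0 ≤ quadForm k μ f)
    (hQM : ∀ f : Lp ℝ 2 μ, ‖f‖ = 1 → quadForm k μ f ≤ M)
    {i j : ℕ} (hj : 1 ≤ j) (hji : j ≤ i) :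
    kernelEig k μ i ≤ kernelEig k μ j := by
  refine kernelEig_le k (kernelEig_nonneg k hQ0 j) fun V hfd hV => ?_
  haveI := hfd
  obtain ⟨W, hWV, hWfd, hWrank⟩ := exists_le_submodule hV hji
  have hsub : SV k μ W ⊆ SV k μ V := by
    rintro s ⟨f, hfW, hf1, rfl⟩
    exact ⟨f, hWV hfW, hf1, rfl⟩
  calc sInf (SV k μ V) ≤ sInf (SV k μ W) :=
        csInf_le_csInf (bddBelow_SV k hQ0 V) (SV_nonempty hWrank hj k) hsub
    _ ≤ kernelEig k μ j := le_kernelEig k M hM hQ0 hQM j W hWfd hWrank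

end Bookkeeping


/-! ### Finite-dimensional spectral control -/

section FinDim

variable {μ : Measure X} (K : PDK X)
  (hker : ∀ z : X, Measurable (fun x => K.k z x))
  (hdiag : Integrable (fun x => K.k x x) μ)
  (V : Submodule ℝ (Lp ℝ 2 μ)) [FiniteDimensional ℝ V]

/-- The map `V → RKHS K`. -/
def psiV : V →ₗ[ℝ] RKHS K := (vLp K hker hdiag).comp V.subtype

/-- `psiV` with codomain its (finite-dimensional) range. -/
def psiV' : V →ₗ[ℝ] (LinearMap.range (psiV K hker hdiag V)) :=
  (psiV K hker hdiag V).rangeRestrict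

/-- The symmetric operator on `V` representing the quadratic form. -/
def TV : V →ₗ[ℝ] V :=
  (LinearMap.adjoint (psiV' K hker hdiag V)).comp (psiV' K hker hdiag V)

lemma inner_TV (u w : V) :
    (inner ℝ (TV K hker hdiag V u) w : ℝ)
      = (inner ℝ (psiV K hker hdiag V u) (psiV K hker hdiag V w) : ℝ) := by
  rw [TV, LinearMap.comp_apply, LinearMap.adjoint_inner_left]
  rw [Submodule.coe_inner]
  rfl

lemma isSymmetric_TV : (TV K hker hdiag V).IsSymmetric := by
  intro u w
  rw [inner_TV]
  rw [show (inner ℝ u (TV K hker hdiag V w) : ℝ) = inner ℝ (TV K hker hdiag V w) u from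
    real_inner_comm _ _]
  rw [inner_TV]
  exact real_inner_comm _ _

lemma quadForm_coe_eq (u : V) :
    quadForm K.k μ ((u : Lp ℝ 2 μ) : X → ℝ) = (inner ℝ (TV K hker hdiag V u) u : ℝ) := by
  rw [inner_TV]
  exact quadForm_eq_vLp K hker hdiag (u : Lp ℝ 2 μ)

include hker hdiag in
set_option maxHeartbeats 1000000 in
/-- Main finite-dimensional control: existence of a sorted eigenbasis giving two-sided
control of the quadratic form against `kernelEig`. -/
lemma exists_top_control {n : ℕ} (hn : Module.finrank ℝ V = n) (j : ℕ) (hj1 : 1 ≤ j)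
    (hjn : j ≤ n) :
    ∃ (lam : ℝ) (c : Fin n → V), Orthonormal ℝ c ∧
      lam ≤ kernelEig K.k μ j ∧
      (∀ f : V, (∀ i : Fin n, (i : ℕ) < j - 1 → (inner ℝ (c i) f : ℝ) = 0) →
        quadForm K.k μ ((f : Lp ℝ 2 μ) : X → ℝ) ≤ lam * ‖f‖ ^ 2) := by
  classical
  set T := TV K hker hdiag V with hTdef
  have hT : T.IsSymmetric := isSymmetric_TV K hker hdiag V
  set b := hT.eigenvectorBasis hn with hbdef
  set vals := hT.eigenvalues hn with hvalsdef
  have heig : ∀ i, T (b i) = (vals i : ℝ) • b i := fun i => hT.apply_eigenvectorBasis hn i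
  set σ := Tuple.sort (fun i => -(vals i)) with hσdef
  have hmono := Tuple.monotone_sort (fun i => -(vals i))
  set es : Fin n → ℝ := fun i => vals (σ i) with hesdef
  have hanti : ∀ i i' : Fin n, i ≤ i' → es i' ≤ es i := by
    intro i i' hii
    have := hmono hii
    simp only [Function.comp_apply] at this
    simp only [hesdef]
    linarith
  set c : Fin n → V := fun i => b (σ i) with hcdef
  have hc_on : Orthonormal ℝ c := b.orthonormal.comp σ σ.injective
  -- expansion of the quadratic form
  have hrepr : ∀ (f : V) (i : Fin n), b.repr f i = (inner ℝ (b i) f : ℝ) :=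
    fun f i => b.repr_apply_apply f i
  have hexp : ∀ f : V, (inner ℝ (T f) f : ℝ) = ∑ i, es i * (inner ℝ (c i) f : ℝ) ^ 2 := by
    intro f
    have h1 : (inner ℝ (T f) f : ℝ) = ∑ i, vals i * (inner ℝ (b i) f : ℝ) ^ 2 := by
      have h2 : (inner ℝ (T f) f : ℝ) = (inner ℝ (b.repr (T f)) (b.repr f) : ℝ) :=
        (b.repr.inner_map_map (T f) f).symm
      rw [h2, PiLp.inner_apply]
      refine Finset.sum_congr rfl fun i _ => ?_
      have h3 : b.repr (T f) i = vals i * b.repr f i := by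
        rw [hrepr, hrepr]
        have h4 : (inner ℝ (b i) (T f) : ℝ) = inner ℝ (T (b i)) f := (hT (b i) f).symm
        rw [h4, heig i]; exact real_inner_smul_left (b i) f (vals i)
      rw [h3, hrepr]
      simp only [RCLike.inner_apply, starRingEnd_apply, star_trivial]
      ring
    rw [h1, ← Equiv.sum_comp σ (fun i => vals i * (inner ℝ (b i) f : ℝ) ^ 2)]
  have hpar : ∀ f : V, ‖f‖ ^ 2 = ∑ i, (inner ℝ (c i) f : ℝ) ^ 2 := by
    intro f
    have h1 : ‖f‖ ^ 2 = ∑ i, (inner ℝ (b i) f : ℝ) ^ 2 := by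
      have h2 : (inner ℝ f f : ℝ) = (inner ℝ (b.repr f) (b.repr f) : ℝ) :=
        (b.repr.inner_map_map f f).symm
      rw [← real_inner_self_eq_norm_sq, h2, PiLp.inner_apply]
      refine Finset.sum_congr rfl fun i _ => ?_
      rw [hrepr]
      simp only [RCLike.inner_apply, starRingEnd_apply, star_trivial]
      ring
    rw [h1, ← Equiv.sum_comp σ (fun i => (inner ℝ (b i) f : ℝ) ^ 2)]
  have hj1n : j - 1 < n := by omega
  set lam := es ⟨j - 1, hj1n⟩ with hlamdef
  refine ⟨lam, c, hc_on, ?_, ?_⟩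
  · -- lam ≤ kernelEig K.k μ j
    set cj : Fin j → V := fun t => c (Fin.castLE hjn t) with hcjdef
    have hcj_on : Orthonormal ℝ cj := hc_on.comp (Fin.castLE hjn) (Fin.castLE_injective hjn)
    set W₀ : Submodule ℝ V := Submodule.span ℝ (Set.range cj) with hW₀def
    set W : Submodule ℝ (Lp ℝ 2 μ) := W₀.map V.subtype with hWdef
    haveI hfdW₀ : FiniteDimensional ℝ W₀ :=
      FiniteDimensional.span_of_finite ℝ (Set.finite_range cj)
    have eWW₀ : W₀ ≃ₗ[ℝ] W := Submodule.equivMapOfInjective V.subtype V.injective_subtype W₀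
    haveI hfdW : FiniteDimensional ℝ W := Module.Finite.equiv eWW₀
    have hWrank : Module.finrank ℝ W = j := by
      rw [← eWW₀.finrank_eq, finrank_span_eq_card hcj_on.linearIndependent, Fintype.card_fin]
    -- inner products with later eigenvectors vanish on W₀
    have horth : ∀ u : V, u ∈ W₀ → ∀ i : Fin n, j ≤ (i : ℕ) → (inner ℝ (c i) u : ℝ) = 0 := by
      intro u hu i hi
      induction hu using Submodule.span_induction with
      | mem x hx =>
        obtain ⟨t, rfl⟩ := hx
        refine hc_on.2 ?_
        intro heq
        rw [heq] at hi
        have := (Fin.castLE hjn t).isLt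
        simp only [Fin.coe_castLE] at hi
        omega
      | zero => rw [inner_zero_right]
      | add x y hx hy ihx ihy => rw [inner_add_right, ihx, ihy, add_zero]
      | smul a x hx ih => rw [real_inner_smul_right, ih, mul_zero]
    -- on W the quadratic form is at least lam
    have hlow : ∀ g : Lp ℝ 2 μ, g ∈ W → ‖g‖ = 1 → lam ≤ quadForm K.k μ g := by
      intro g hg hg1
      obtain ⟨u, huW₀, rfl⟩ := Submodule.mem_map.mp hg
      have hnu : ‖u‖ = 1 := hg1
      have hqf : quadForm K.k μ ((V.subtype u : Lp ℝ 2 μ) : X → ℝ)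
          = (inner ℝ (T u) u : ℝ) := quadForm_coe_eq K hker hdiag V u
      rw [hqf, hexp u]
      have : lam * ‖u‖ ^ 2 ≤ ∑ i, es i * (inner ℝ (c i) u : ℝ) ^ 2 := by
        rw [hpar u, Finset.mul_sum]
        refine Finset.sum_le_sum fun i _ => ?_
        rcases lt_or_ge ((i : ℕ)) j with hij | hij
        · have hle : lam ≤ es i := by
            refine hanti i ⟨j - 1, hj1n⟩ ?_
            show (i : ℕ) ≤ j - 1
            omega
          nlinarith [sq_nonneg ((inner ℝ (c i) u : ℝ))]
        · rw [horth u huW₀ i hij]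
          simp
      rw [hnu] at this
      simpa using this
    have hne : (SV K.k μ W).Nonempty := SV_nonempty hWrank hj1 K.k
    calc lam ≤ sInf (SV K.k μ W) := le_sInf_SV K.k W hne hlow
      _ ≤ kernelEig K.k μ j :=
        le_kernelEig K.k (MK K μ) (MK_nonneg K) (quadForm_nonneg_Lp K hker hdiag)
          (quadForm_le_MK K hker hdiag) j W hfdW hWrank
  · -- upper control
    intro f hf
    rw [quadForm_coe_eq K hker hdiag V f, hexp f]
    have : ∑ i, es i * (inner ℝ (c i) f : ℝ) ^ 2 ≤ lam * ‖f‖ ^ 2 := by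
      rw [hpar f, Finset.mul_sum]
      refine Finset.sum_le_sum fun i _ => ?_
      rcases lt_or_ge ((i : ℕ)) (j - 1) with hij | hij
      · rw [hf i hij]
        simp
      · have hle : es i ≤ lam := by
          refine hanti ⟨j - 1, hj1n⟩ i ?_
          show (j - 1 : ℕ) ≤ i
          omega
        nlinarith [sq_nonneg ((inner ℝ (c i) f : ℝ))]
    exact this

end FinDim


/-! ### Weyl-type existence -/

section Weyl

variable {μ : Measure X}

set_option maxHeartbeats 1000000 in
lemma weyl_exists (K₁ K₂ : PDK X)
    (hker₁ : ∀ z : X, Measurable (fun x => K₁.k z x))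
    (hdiag₁ : Integrable (fun x => K₁.k x x) μ)
    (hker₂ : ∀ z : X, Measurable (fun x => K₂.k z x))
    (hdiag₂ : Integrable (fun x => K₂.k x x) μ)
    {j : ℕ} (hj : 1 ≤ j)
    (V : Submodule ℝ (Lp ℝ 2 μ)) (hfd : FiniteDimensional ℝ V)
    (hV : Module.finrank ℝ V = 2 * j - 1) :
    ∃ f : Lp ℝ 2 μ, f ∈ V ∧ ‖f‖ = 1 ∧
      quadForm K₁.k μ f ≤ kernelEig K₁.k μ j ∧
      quadForm K₂.k μ f ≤ kernelEig K₂.k μ j := by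
  classical
  haveI := hfd
  have hjn : j ≤ 2 * j - 1 := by omega
  obtain ⟨lam₁, c₁, _, hlam₁, hbd₁⟩ := exists_top_control K₁ hker₁ hdiag₁ V hV j hj hjn
  obtain ⟨lam₂, c₂, _, hlam₂, hbd₂⟩ := exists_top_control K₂ hker₂ hdiag₂ V hV j hj hjn
  have hm : j - 1 ≤ 2 * j - 1 := by omega
  set Φ : V →ₗ[ℝ] (Fin (j-1) → ℝ) × (Fin (j-1) → ℝ) :=
    LinearMap.prod
      (LinearMap.pi fun t => ((innerSL ℝ (c₁ (Fin.castLE hm t))).toLinearMap))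
      (LinearMap.pi fun t => ((innerSL ℝ (c₂ (Fin.castLE hm t))).toLinearMap)) with hΦdef
  have hker_ne : LinearMap.ker Φ ≠ ⊥ := by
    intro hbot
    have h1 := Φ.finrank_range_add_finrank_ker
    rw [hbot, finrank_bot, add_zero, hV] at h1
    have h2 : Module.finrank ℝ (LinearMap.range Φ)
        ≤ Module.finrank ℝ ((Fin (j-1) → ℝ) × (Fin (j-1) → ℝ)) := Submodule.finrank_le _
    rw [Module.finrank_prod, Module.finrank_fin_fun] at h2
    omega
  obtain ⟨g, hgker, hg0⟩ := Submodule.exists_mem_ne_zero_of_ne_bot hker_ne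
  set f₀ : V := ‖g‖⁻¹ • g with hf₀def
  have hf₀1 : ‖f₀‖ = 1 := by
    rw [hf₀def, norm_smul, norm_inv, norm_norm, inv_mul_cancel₀ (norm_ne_zero_iff.mpr hg0)]
  have hΦg : Φ g = 0 := LinearMap.mem_ker.mp hgker
  have hcomp₁ : ∀ i : Fin (2*j-1), (i : ℕ) < j - 1 → (inner ℝ (c₁ i) f₀ : ℝ) = 0 := by
    intro i hi
    have h1 : (Φ g).1 (⟨(i : ℕ), hi⟩ : Fin (j-1)) = 0 := by rw [hΦg]; rfl
    have h2 : (inner ℝ (c₁ (Fin.castLE hm ⟨(i : ℕ), hi⟩)) g : ℝ) = 0 := h1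
    have h3 : Fin.castLE hm (⟨(i : ℕ), hi⟩ : Fin (j-1)) = i := by
      apply Fin.ext; rfl
    rw [h3] at h2
    rw [hf₀def]; have h5 := real_inner_smul_right (c₁ i) g ‖g‖⁻¹; rw [h2, mul_zero] at h5; exact h5
  have hcomp₂ : ∀ i : Fin (2*j-1), (i : ℕ) < j - 1 → (inner ℝ (c₂ i) f₀ : ℝ) = 0 := by
    intro i hi
    have h1 : (Φ g).2 (⟨(i : ℕ), hi⟩ : Fin (j-1)) = 0 := by rw [hΦg]; rfl
    have h2 : (inner ℝ (c₂ (Fin.castLE hm ⟨(i : ℕ), hi⟩)) g : ℝ) = 0 := h1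
    have h3 : Fin.castLE hm (⟨(i : ℕ), hi⟩ : Fin (j-1)) = i := by
      apply Fin.ext; rfl
    rw [h3] at h2
    rw [hf₀def]; have h5 := real_inner_smul_right (c₂ i) g ‖g‖⁻¹; rw [h2, mul_zero] at h5; exact h5
  refine ⟨(f₀ : Lp ℝ 2 μ), SetLike.coe_mem f₀, ?_, ?_, ?_⟩
  · rw [← hf₀1]; rfl
  · have := hbd₁ f₀ hcomp₁
    rw [hf₀1] at this
    simpa using le_trans this (by simpa using hlam₁)
  · have := hbd₂ f₀ hcomp₂
    rw [hf₀1] at this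
    simpa using le_trans this (by simpa using hlam₂)

end Weyl

end KEAux

open KEAux

set_option maxHeartbeats 1000000

/-- If `λ_i(k₁) ≍ λ_{2i}(k₁)` and `λ_i(k₂) = O(λ_i(k₁))`, then
`λ_i(k₁ + k₂) ≍ λ_i(k₁)` as `i → ∞`. -/
theorem kernelEig_add_asymp
    {X : Type*} [TopologicalSpace X] [T2Space X] [MeasurableSpace X] [BorelSpace X]
    (μ : Measure X)
    (k₁ k₂ : X → X → ℝ)
    (hk₁_cont : Continuous (Function.uncurry k₁)) (hk₂_cont : Continuous (Function.uncurry k₂))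
    (hk₁_pd : IsPosDefKernel k₁) (hk₂_pd : IsPosDefKernel k₂)
    (hk₁_int : Integrable (fun x => k₁ x x) μ) (hk₂_int : Integrable (fun x => k₂ x x) μ)
    (h_double : ∃ c > (0:ℝ), ∃ C > (0:ℝ), ∃ N : ℕ, ∀ i ≥ N,
        c * kernelEig k₁ μ (2 * i) ≤ kernelEig k₁ μ i ∧
        kernelEig k₁ μ i ≤ C * kernelEig k₁ μ (2 * i))
    (h_dom : ∃ C > (0:ℝ), ∃ N : ℕ, ∀ i ≥ N, kernelEig k₂ μ i ≤ C * kernelEig k₁ μ i) :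
    ∃ c > (0:ℝ), ∃ C > (0:ℝ), ∃ N : ℕ, ∀ i ≥ N,
      c * kernelEig k₁ μ i ≤ kernelEig (fun x y => k₁ x y + k₂ x y) μ i ∧
      kernelEig (fun x y => k₁ x y + k₂ x y) μ i ≤ C * kernelEig k₁ μ i := by
  classical
  obtain ⟨c₀, hc₀, C₀, hC₀, N₀, hdb⟩ := h_double
  obtain ⟨C₂, hC₂, N₂, hdom⟩ := h_dom
  set K₁ : PDK X := ⟨k₁, hk₁_pd.1, hk₁_pd.2⟩ with hK₁def
  set K₂ : PDK X := ⟨k₂, hk₂_pd.1, hk₂_pd.2⟩ with hK₂def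
  set KS : PDK X := K₁.add K₂ with hKSdef
  have hker₁ : ∀ z : X, Measurable (fun x => K₁.k z x) := fun z =>
    (hk₁_cont.comp (Continuous.prodMk_right z)).measurable
  have hker₂ : ∀ z : X, Measurable (fun x => K₂.k z x) := fun z =>
    (hk₂_cont.comp (Continuous.prodMk_right z)).measurable
  have hkerS : ∀ z : X, Measurable (fun x => KS.k z x) := fun z =>
    ((hker₁ z).add (hker₂ z))
  have hdiag₁ : Integrable (fun x => K₁.k x x) μ := hk₁_int
  have hdiag₂ : Integrable (fun x => K₂.k x x) μ := hk₂_int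
  have hdiagS : Integrable (fun x => KS.k x x) μ := hk₁_int.add hk₂_int
  -- positivity and boundedness
  have hQ0₁ : ∀ f : Lp ℝ 2 μ, 0 ≤ quadForm K₁.k μ f := quadForm_nonneg_Lp K₁ hker₁ hdiag₁
  have hQ0₂ : ∀ f : Lp ℝ 2 μ, 0 ≤ quadForm K₂.k μ f := quadForm_nonneg_Lp K₂ hker₂ hdiag₂
  have hQ0S : ∀ f : Lp ℝ 2 μ, 0 ≤ quadForm KS.k μ f := quadForm_nonneg_Lp KS hkerS hdiagS
  have hQM₁ : ∀ f : Lp ℝ 2 μ, ‖f‖ = 1 → quadForm K₁.k μ f ≤ MK K₁ μ :=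
    quadForm_le_MK K₁ hker₁ hdiag₁
  have hQM₂ : ∀ f : Lp ℝ 2 μ, ‖f‖ = 1 → quadForm K₂.k μ f ≤ MK K₂ μ :=
    quadForm_le_MK K₂ hker₂ hdiag₂
  have hQMS : ∀ f : Lp ℝ 2 μ, ‖f‖ = 1 → quadForm KS.k μ f ≤ MK KS μ :=
    quadForm_le_MK KS hkerS hdiagS
  have hadd : ∀ f : Lp ℝ 2 μ, quadForm KS.k μ f = quadForm K₁.k μ f + quadForm K₂.k μ f :=
    fun f => quadForm_add_kernel K₁ K₂ hker₁ hker₂ hdiag₁ hdiag₂ (Lp.memLp f)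
  have hsum_eq : (fun x y => k₁ x y + k₂ x y) = KS.k := rfl
  rw [hsum_eq]
  -- lower bound
  have hlow : ∀ i, 1 ≤ i → kernelEig K₁.k μ i ≤ kernelEig KS.k μ i := by
    intro i hi
    refine kernelEig_le K₁.k (kernelEig_nonneg KS.k hQ0S i) fun V hfd hV => ?_
    have h1 : sInf (SV K₁.k μ V) ≤ sInf (SV KS.k μ V) := by
      refine le_csInf (SV_nonempty hV hi KS.k) ?_
      rintro s ⟨f, hfV, hf1, rfl⟩
      have h2 := hQ0₂ f
      have h3 : sInf (SV K₁.k μ V) ≤ quadForm K₁.k μ f :=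
        sInf_SV_le_quadForm K₁.k hQ0₁ V f hfV hf1
      rw [hadd f]
      linarith
    exact le_trans h1
      (le_kernelEig KS.k (MK KS μ) (MK_nonneg KS) hQ0S hQMS i V hfd hV)
  -- the index
  refine ⟨1, one_pos, (1 + C₂) * C₀, by positivity, 2 * (max (max N₀ N₂) 1) + 2, fun i hi => ?_⟩
  set j := (i + 1) / 2 with hjdef
  have hj1 : 1 ≤ j := by omega
  have hjN₀ : N₀ ≤ j := by
    have h := le_max_left (max N₀ N₂) 1
    have h2 := le_max_left N₀ N₂
    omega
  have hjN₂ : N₂ ≤ j := by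
    have h2 := le_max_right N₀ N₂
    have h := le_max_left (max N₀ N₂) 1
    omega
  have h2j1 : 2 * j - 1 ≤ i := by omega
  have h2j : i ≤ 2 * j := by omega
  constructor
  · rw [one_mul]
    exact hlow i (by omega)
  · have hmonoS : kernelEig KS.k μ i ≤ kernelEig KS.k μ (2 * j - 1) :=
      kernelEig_antitone KS.k (MK KS μ) (MK_nonneg KS) hQ0S hQMS (by omega) h2j1
    have hweyl : kernelEig KS.k μ (2 * j - 1)
        ≤ kernelEig K₁.k μ j + kernelEig K₂.k μ j := by
      refine kernelEig_le KS.k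
        (add_nonneg (kernelEig_nonneg K₁.k hQ0₁ j) (kernelEig_nonneg K₂.k hQ0₂ j))
        fun V hfd hV => ?_
      obtain ⟨f, hfV, hf1, hb₁, hb₂⟩ :=
        weyl_exists K₁ K₂ hker₁ hdiag₁ hker₂ hdiag₂ hj1 V hfd hV
      have h1 : sInf (SV KS.k μ V) ≤ quadForm KS.k μ f :=
        sInf_SV_le_quadForm KS.k hQ0S V f hfV hf1
      rw [hadd f] at h1
      linarith
    have hdomj := hdom j hjN₂
    have hdbj := (hdb j hjN₀).2
    have hmono₁ : kernelEig K₁.k μ (2 * j) ≤ kernelEig K₁.k μ i :=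
      kernelEig_antitone K₁.k (MK K₁ μ) (MK_nonneg K₁) hQ0₁ hQM₁ (by omega) h2j
    calc kernelEig KS.k μ i ≤ kernelEig K₁.k μ j + kernelEig K₂.k μ j :=
          le_trans hmonoS hweyl
      _ ≤ kernelEig K₁.k μ j + C₂ * kernelEig K₁.k μ j := by linarith
      _ = (1 + C₂) * kernelEig K₁.k μ j := by ring
      _ ≤ (1 + C₂) * (C₀ * kernelEig K₁.k μ (2 * j)) := by
          refine mul_le_mul_of_nonneg_left hdbj (by linarith)
      _ = ((1 + C₂) * C₀) * kernelEig K₁.k μ (2 * j) := by ring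
      _ ≤ ((1 + C₂) * C₀) * kernelEig K₁.k μ i := by
          refine mul_le_mul_of_nonneg_left hmono₁ (by positivity)


end
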